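/- Let F : ℝⁿ → ℝ be differentiable with ω₁-Lipschitz gradient (ω₁ > 0) and suppose F(x) ≥ 0 for all x ∈ ℝⁿ. Let (x_t)_{t≥0} be a sequence in ℝⁿ with x_{t+1} = x_t + α_t h_t, where each h_t ≠ 0 satisfies −⟨∇F(x_t), h_t⟩ ≥ δ‖∇F(x_t)‖·‖h_t‖ for a fixed δ > 0, and α_t = −⟨∇F(x_t), h_t⟩ / (ω₁‖h_t‖²). Then Σ_{t=0}^∞ ‖∇F(x_t)‖² ≤ (2ω₁/δ²)·F(x_0); in particular the series of squared gradient norms converges. -/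

import Mathlib

open RealInnerProductSpace

set_option maxHeartbeats 1000000 in
private lemma descent_lemma {n : ℕ} {ω₁ : ℝ} (hω₁ : 0 < ω₁)
    {F : EuclideanSpace ℝ (Fin n) → ℝ}
    (hdiff : Differentiable ℝ F)
    (hlip : ∀ x y : EuclideanSpace ℝ (Fin n),
      ‖gradient F x - gradient F y‖ ≤ ω₁ * ‖x - y‖)
    (x v : EuclideanSpace ℝ (Fin n)) :
    F (x + v) ≤ F x + ⟪gradient F x, v⟫ + ω₁ / 2 * ‖v‖ ^ 2 := by
  -- gradient is continuous
  have hlipg : LipschitzWith ω₁.toNNReal (gradient F) := by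
    apply LipschitzWith.of_dist_le_mul
    intro a b
    rw [dist_eq_norm, dist_eq_norm]
    simpa [Real.coe_toNNReal _ hω₁.le] using hlip a b
  have hcontg : Continuous (gradient F) := hlipg.continuous
  set g : ℝ → ℝ := fun t => F (x + t • v) with hg
  have hderiv : ∀ t : ℝ, HasDerivAt g (⟪gradient F (x + t • v), v⟫) t := by
    intro t
    have h1 : HasDerivAt (fun t : ℝ => x + t • v) v t := by
      simpa using ((hasDerivAt_id t).smul_const v).const_add x
    have h2 := ((hdiff (x + t • v)).hasGradientAt.hasFDerivAt).comp_hasDerivAt t h1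
    exact h2
  have hcont' : Continuous fun t : ℝ => ⟪gradient F (x + t • v), v⟫ := by
    exact (hcontg.comp (continuous_const.add (continuous_id.smul continuous_const))).inner continuous_const
  have hFTC : ∫ t in (0:ℝ)..1, ⟪gradient F (x + t • v), v⟫ = g 1 - g 0 :=
    intervalIntegral.integral_eq_sub_of_hasDerivAt (fun t _ => hderiv t)
      (hcont'.intervalIntegrable 0 1)
  have hbound : ∀ t ∈ Set.Icc (0:ℝ) 1,
      ⟪gradient F (x + t • v), v⟫ ≤ ⟪gradient F x, v⟫ + ω₁ * t * ‖v‖ ^ 2 := by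
    intro t ht
    have key : ⟪gradient F (x + t • v) - gradient F x, v⟫ ≤ ω₁ * t * ‖v‖ ^ 2 := by
      calc ⟪gradient F (x + t • v) - gradient F x, v⟫
          ≤ ‖gradient F (x + t • v) - gradient F x‖ * ‖v‖ := real_inner_le_norm _ _
        _ ≤ ω₁ * ‖(x + t • v) - x‖ * ‖v‖ := by
            gcongr; exact hlip _ _
        _ = ω₁ * t * ‖v‖ ^ 2 := by
            rw [show (x + t • v) - x = t • v by abel, norm_smul]
            rw [Real.norm_eq_abs, abs_of_nonneg ht.1]; ring
    have := inner_sub_left (𝕜 := ℝ) (gradient F (x + t • v)) (gradient F x) v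
    linarith [this ▸ key]
  have hintle : ∫ t in (0:ℝ)..1, ⟪gradient F (x + t • v), v⟫
      ≤ ∫ t in (0:ℝ)..1, (⟪gradient F x, v⟫ + ω₁ * t * ‖v‖ ^ 2) := by
    apply intervalIntegral.integral_mono_on (by norm_num)
      (hcont'.intervalIntegrable 0 1)
      (Continuous.intervalIntegrable (by fun_prop : Continuous
        fun t : ℝ => ⟪gradient F x, v⟫ + ω₁ * t * ‖v‖ ^ 2) 0 1)
    exact hbound
  have hrhs : ∫ t in (0:ℝ)..1, (⟪gradient F x, v⟫ + ω₁ * t * ‖v‖ ^ 2)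
      = ⟪gradient F x, v⟫ + ω₁ / 2 * ‖v‖ ^ 2 := by
    rw [intervalIntegral.integral_add (intervalIntegrable_const)
      (Continuous.intervalIntegrable (by fun_prop : Continuous
        fun t : ℝ => ω₁ * t * ‖v‖ ^ 2) 0 1)]
    have : ∫ t in (0:ℝ)..1, ω₁ * t * ‖v‖ ^ 2
        = (ω₁ * ‖v‖ ^ 2) * ∫ t in (0:ℝ)..1, t := by
      rw [← intervalIntegral.integral_const_mul]
      congr 1; ext t; ring
    rw [this, integral_id]
    simp; ring
  have hg1 : g 1 = F (x + v) := by simp [hg]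
  have hg0 : g 0 = F x := by simp [hg]
  rw [hg1, hg0] at hFTC
  linarith [hrhs ▸ hintle, hFTC]

/-- Summability bound in the proof of Theorem A.2 (th.stationary): the squared
gradient norms along the boosting iterates are summable with sum at most
`2 ω₁ F(x₀) / δ²`. -/
theorem stmt_3 (n : ℕ) (ω₁ : ℝ) (hω₁ : 0 < ω₁)
    (F : EuclideanSpace ℝ (Fin n) → ℝ)
    (hdiff : Differentiable ℝ F)
    (hlip : ∀ x y : EuclideanSpace ℝ (Fin n),
      ‖gradient F x - gradient F y‖ ≤ ω₁ * ‖x - y‖)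
    (hF0 : ∀ x, 0 ≤ F x)
    (δ : ℝ) (hδ : 0 < δ)
    (x h : ℕ → EuclideanSpace ℝ (Fin n)) (α : ℕ → ℝ)
    (hh : ∀ t, h t ≠ 0)
    (hangle : ∀ t, -⟪gradient F (x t), h t⟫ ≥ δ * (‖gradient F (x t)‖ * ‖h t‖))
    (hα : ∀ t, α t = -⟪gradient F (x t), h t⟫ / (ω₁ * ‖h t‖ ^ 2))
    (hstep : ∀ t, x (t + 1) = x t + α t • h t) :
    Summable (fun t => ‖gradient F (x t)‖ ^ 2) ∧
      ∑' t, ‖gradient F (x t)‖ ^ 2 ≤ (2 * ω₁ / δ ^ 2) * F (x 0) := by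
  set g : ℕ → ℝ := fun t => ‖gradient F (x t)‖ ^ 2 with hgdef
  -- per-step decrease
  have hdec : ∀ t, δ ^ 2 / (2 * ω₁) * g t ≤ F (x t) - F (x (t + 1)) := by
    intro t
    set c : ℝ := -⟪gradient F (x t), h t⟫ with hc
    have hhn : (0:ℝ) < ‖h t‖ := norm_pos_iff.mpr (hh t)
    have hhn2 : (0:ℝ) < ‖h t‖ ^ 2 := by positivity
    have hcge : c ≥ δ * (‖gradient F (x t)‖ * ‖h t‖) := hangle t
    have hcnn : 0 ≤ c := le_trans (by positivity) hcge
    have hdesc := descent_lemma hω₁ hdiff hlip (x t) (α t • h t)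
    rw [← hstep t] at hdesc
    have hinner : ⟪gradient F (x t), α t • h t⟫ = α t * (-c) := by
      rw [real_inner_smul_right]; simp [hc]
    have hnorm : ‖α t • h t‖ ^ 2 = α t ^ 2 * ‖h t‖ ^ 2 := by
      rw [norm_smul, mul_pow, Real.norm_eq_abs, sq_abs]
    have hαt : α t = c / (ω₁ * ‖h t‖ ^ 2) := hα t
    have hstepval : F (x (t + 1)) ≤ F (x t) - c ^ 2 / (2 * ω₁ * ‖h t‖ ^ 2) := by
      rw [hinner, hnorm, hαt] at hdesc
      have : c / (ω₁ * ‖h t‖ ^ 2) * -c + ω₁ / 2 * ((c / (ω₁ * ‖h t‖ ^ 2)) ^ 2 * ‖h t‖ ^ 2)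
          = - (c ^ 2 / (2 * ω₁ * ‖h t‖ ^ 2)) := by
        field_simp; ring
      linarith [hdesc, this]
    have hc2 : δ ^ 2 * (g t * ‖h t‖ ^ 2) ≤ c ^ 2 := by
      have := mul_self_le_mul_self (by positivity) hcge
      calc δ ^ 2 * (g t * ‖h t‖ ^ 2)
          = (δ * (‖gradient F (x t)‖ * ‖h t‖)) * (δ * (‖gradient F (x t)‖ * ‖h t‖)) := by
            simp [hgdef]; ring
        _ ≤ c * c := this
        _ = c ^ 2 := (sq c).symm
    have : δ ^ 2 / (2 * ω₁) * g t ≤ c ^ 2 / (2 * ω₁ * ‖h t‖ ^ 2) := by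
      rw [div_mul_eq_mul_div, div_le_div_iff₀ (by positivity) (by positivity)]
      calc δ ^ 2 * g t * (2 * ω₁ * ‖h t‖ ^ 2) = (δ ^ 2 * (g t * ‖h t‖ ^ 2)) * (2 * ω₁) := by ring
        _ ≤ c ^ 2 * (2 * ω₁) := mul_le_mul_of_nonneg_right hc2 (by positivity)
    linarith
  -- partial sums bounded
  have hpartial : ∀ N, ∑ t ∈ Finset.range N, g t ≤ 2 * ω₁ / δ ^ 2 * F (x 0) := by
    intro N
    have h1 : ∑ t ∈ Finset.range N, (δ ^ 2 / (2 * ω₁) * g t) ≤ F (x 0) - F (x N) := by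
      have := Finset.sum_range_sub' (fun t => F (x t)) N
      calc ∑ t ∈ Finset.range N, (δ ^ 2 / (2 * ω₁) * g t)
          ≤ ∑ t ∈ Finset.range N, (F (x t) - F (x (t + 1))) :=
            Finset.sum_le_sum fun t _ => hdec t
        _ = F (x 0) - F (x N) := this
    have h2 : δ ^ 2 / (2 * ω₁) * ∑ t ∈ Finset.range N, g t ≤ F (x 0) := by
      rw [Finset.mul_sum]; linarith [hF0 (x N)]
    have hpos : (0:ℝ) < δ ^ 2 / (2 * ω₁) := by positivity
    rw [show 2 * ω₁ / δ ^ 2 * F (x 0) = F (x 0) / (δ ^ 2 / (2 * ω₁)) by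
      field_simp]
    rw [le_div_iff₀ hpos]
    linarith
  have hsum : Summable g := summable_of_sum_range_le (fun t => by positivity) hpartial
  exact ⟨hsum, Real.tsum_le_of_sum_range_le (fun t => by positivity) hpartial⟩
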